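/- Let G be a finite abelian group, G₀ ⊆ G a subset, and g ∈ G₀. Set m = min { k ∈ ℕ, k ≥ 1 : k·g ∈ ⟨G₀ \ {g}⟩ }. Then m equals each of the following: gcd { v_g(B) : B ∈ B(G₀) }; gcd { v_g(A) : A an atom over G₀ }; min { v_g(A) : A an atom over G₀ with v_g(A) > 0 }; min { v_g(B) : B ∈ B(G₀) with v_g(B) > 0 }; and gcd { k ∈ ℕ, k ≥ 1 : k·g ∈ ⟨G₀ \ {g}⟩ }. In particular, m divides ord(g). -/

import Mathlib

open Multiset

lemma sum_mem_closure' {G : Type*} [AddCommGroup G] {S : Set G} {T : Multiset G}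
    (h : ∀ x ∈ T, x ∈ S) : T.sum ∈ AddSubgroup.closure S :=
  AddSubgroup.multiset_sum_mem _ _ fun x hx => AddSubgroup.subset_closure (h x hx)

lemma closure_eq_sums {G : Type*} [AddCommGroup G] [Fintype G] (S : Set G) {x : G}
    (hx : x ∈ AddSubgroup.closure S) :
    ∃ T : Multiset G, (∀ y ∈ T, y ∈ S) ∧ T.sum = x := by
  induction hx using AddSubgroup.closure_induction with
  | mem y hy => exact ⟨{y}, by simpa using hy, by simp⟩
  | zero => exact ⟨0, by simp, by simp⟩
  | add a b ha hb iha ihb =>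
      obtain ⟨T1, h1, h1s⟩ := iha
      obtain ⟨T2, h2, h2s⟩ := ihb
      refine ⟨T1 + T2, ?_, by simp [h1s, h2s]⟩
      intro y hy
      rcases Multiset.mem_add.1 hy with h | h
      exacts [h1 y h, h2 y h]
  | neg a ha iha =>
      obtain ⟨T, h1, h1s⟩ := iha
      refine ⟨(Fintype.card G - 1) • T, ?_, ?_⟩
      · intro y hy
        rw [Multiset.mem_nsmul] at hy
        exact h1 y hy.2
      · rw [Multiset.sum_nsmul, h1s]
        have hc : Fintype.card G • a = 0 := card_nsmul_eq_zero
        have hone : 1 ≤ Fintype.card G := Fintype.card_pos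
        calc (Fintype.card G - 1) • a = Fintype.card G • a + -(1 • a) := by
              rw [sub_nsmul a hone]
          _ = -a := by rw [hc]; simp

section Defs

variable {G : Type*} [AddCommGroup G]

/-- `S` is a zero-sum sequence over `G₀`: a multiset with entries in `G₀` and sum `0`. -/
def IsZeroSumSeq (G₀ : Set G) (S : Multiset G) : Prop :=
  (∀ x ∈ S, x ∈ G₀) ∧ S.sum = 0

/-- `S` is an atom over `G₀`: a nonempty zero-sum sequence over `G₀` that is not the
union of two nonempty zero-sum sequences over `G₀`. -/
def IsAtomSeq (G₀ : Set G) (S : Multiset G) : Prop :=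
  IsZeroSumSeq G₀ S ∧ S ≠ 0 ∧
    ∀ A B : Multiset G, IsZeroSumSeq G₀ A → IsZeroSumSeq G₀ B →
      A ≠ 0 → B ≠ 0 → S ≠ A + B

/-- The set of lengths of `B`: all `k` such that `B` is a union of `k` atoms over `G₀`. -/
def LengthSet (G₀ : Set G) (B : Multiset G) : Set ℕ :=
  {k | ∃ l : Multiset (Multiset G), Multiset.card l = k ∧
      (∀ A ∈ l, IsAtomSeq G₀ A) ∧ l.sum = B}

/-- The set of successive distances of a set of naturals. -/
def DeltaOf (L : Set ℕ) : Set ℕ :=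
  {d | ∃ x ∈ L, ∃ y ∈ L, x < y ∧ y - x = d ∧ ∀ z ∈ L, ¬(x < z ∧ z < y)}

/-- The set of distances `Δ(G₀)`. -/
def DeltaSet (G₀ : Set G) : Set ℕ :=
  {d | ∃ B : Multiset G, IsZeroSumSeq G₀ B ∧ B ≠ 0 ∧ d ∈ DeltaOf (LengthSet G₀ B)}

/-- `G₀` is half-factorial if `Δ(G₀) = ∅`. -/
def IsHalfFactorialSet (G₀ : Set G) : Prop := DeltaSet G₀ = ∅

/-- `G₀` is minimal non-half-factorial if `Δ(G₀) ≠ ∅` and every proper subset is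
half-factorial. -/
def IsMinNonHalfFactorial (G₀ : Set G) : Prop :=
  (DeltaSet G₀).Nonempty ∧ ∀ G₁ : Set G, G₁ ⊂ G₀ → DeltaSet G₁ = ∅

/-- The cross number `k(S) = Σ 1/ord(g)` of a multiset over `G`. -/
noncomputable def crossNumber (S : Multiset G) : ℚ :=
  (S.map (fun g => ((addOrderOf g : ℚ))⁻¹)).sum

/-- `G₀` is an LCN-set if every atom over `G₀` has cross number at least 1. -/
def IsLCNSet (G₀ : Set G) : Prop :=
  ∀ U : Multiset G, IsAtomSeq G₀ U → 1 ≤ crossNumber U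

/-- A subset of `G \ {0}` is independent if any integral linear relation on its elements
has all summands zero. -/
def IsIndependentSet (E : Set G) : Prop :=
  (0 : G) ∉ E ∧ ∀ s : Finset G, ↑s ⊆ E → ∀ f : G → ℤ,
    (∑ e ∈ s, f e • e) = 0 → ∀ e ∈ s, f e • e = 0

/-- `d` is a greatest common divisor of the set `S` of naturals. -/
def IsSetGcd (S : Set ℕ) (d : ℕ) : Prop :=
  (∀ s ∈ S, d ∣ s) ∧ ∀ e : ℕ, (∀ s ∈ S, e ∣ s) → e ∣ d

end Defs

/-- The set of minimal distances `Δ*(G)`. -/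
def DeltaStar (G : Type*) [AddCommGroup G] : Set ℕ :=
  {d | ∃ G₀ : Set G, (DeltaSet G₀).Nonempty ∧ d = sInf (DeltaSet G₀)}

/-- The `p`-rank of a finite abelian group: `log_p` of the order of the `p`-torsion
subgroup `{x | p • x = 0}`. -/
noncomputable def pRank (G : Type*) [AddCommGroup G] (p : ℕ) : ℕ :=
  Nat.log p (Nat.card {x : G // p • x = 0})

/-- The rank of a finite abelian group: the maximum of the `p`-ranks over all primes. -/
noncomputable def rankG (G : Type*) [AddCommGroup G] : ℕ :=
  sSup {r : ℕ | ∃ p : ℕ, p.Prime ∧ r = pRank G p}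


section Aux
variable {G : Type*} [AddCommGroup G] [DecidableEq G]

lemma m_dvd_count {G₀ : Set G} {g : G} {m : ℕ}
    (hdvd : ∀ k : ℕ, 0 < k → k • g ∈ AddSubgroup.closure (G₀ \ {g}) → m ∣ k)
    {B : Multiset G} (hB : IsZeroSumSeq G₀ B) : m ∣ B.count g := by
  rcases Nat.eq_zero_or_pos (B.count g) with h | h
  · simp [h]
  refine hdvd _ h ?_
  have hsplit : Multiset.filter (fun a => g = a) B + Multiset.filter (fun a => ¬ g = a) B = B :=
    Multiset.filter_add_not _ B
  have hf : (Multiset.filter (fun a => g = a) B).sum = B.count g • g := by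
    rw [show Multiset.filter (fun a => g = a) B = Multiset.filter (Eq g) B from rfl,
      Multiset.filter_eq, Multiset.sum_replicate]
  have hrest : (Multiset.filter (fun a => ¬ g = a) B).sum ∈ AddSubgroup.closure (G₀ \ {g}) := by
    apply sum_mem_closure'
    intro x hx
    rw [Multiset.mem_filter] at hx
    exact ⟨hB.1 x hx.1, fun hxg => hx.2 (Set.mem_singleton_iff.1 hxg).symm⟩
  have hsum : B.count g • g + (Multiset.filter (fun a => ¬ g = a) B).sum = 0 := by
    rw [← hf, ← Multiset.sum_add, hsplit, hB.2]
  have : B.count g • g = -(Multiset.filter (fun a => ¬ g = a) B).sum :=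
    eq_neg_of_add_eq_zero_left hsum
  rw [this]
  exact neg_mem hrest

lemma exists_atom_le {G₀ : Set G} (g : G) :
    ∀ B : Multiset G, IsZeroSumSeq G₀ B → 0 < B.count g →
      ∃ A, IsAtomSeq G₀ A ∧ A.count g ≤ B.count g ∧ 0 < A.count g := by
  intro B
  induction B using Multiset.strongInductionOn with
  | ih B ih =>
    intro hB hpos
    by_cases hA : IsAtomSeq G₀ B
    · exact ⟨B, hA, le_rfl, hpos⟩
    · have hBne : B ≠ 0 := by
        intro h0; rw [h0] at hpos; simp at hpos
      simp only [IsAtomSeq, not_and, not_forall] at hA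
      obtain ⟨B₁, B₂, h1, h2, hn1, hn2, heq⟩ := hA hB hBne
      rw [not_not] at heq
      have hcount : B.count g = B₁.count g + B₂.count g := by
        rw [heq, Multiset.count_add]
      rcases Nat.eq_zero_or_pos (B₁.count g) with h | h
      · have h2pos : 0 < B₂.count g := by omega
        obtain ⟨A, hA, hle, hApos⟩ := ih B₂ (by rw [heq]; exact lt_add_of_pos_left _ (pos_iff_ne_zero.2 hn1)) h2 h2pos
        exact ⟨A, hA, by omega, hApos⟩
      · obtain ⟨A, hA, hle, hApos⟩ := ih B₁ (by rw [heq]; exact lt_add_of_pos_right _ (pos_iff_ne_zero.2 hn2)) h1 h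
        exact ⟨A, hA, by omega, hApos⟩

end Aux

/-- For `g ∈ G₀` and `m = min {k ≥ 1 : k·g ∈ ⟨G₀ \ {g}⟩}`, `m` equals the
gcd of the `g`-multiplicities of zero-sum sequences resp. atoms over `G₀`, the minimal
positive `g`-multiplicity of an atom resp. zero-sum sequence over `G₀`, and the gcd of
`{k ≥ 1 : k·g ∈ ⟨G₀ \ {g}⟩}`; in particular `m ∣ ord(g)`. -/
theorem stmt_6 {G : Type*} [AddCommGroup G] [Fintype G] [DecidableEq G]
    (G₀ : Set G) (g : G) (hg : g ∈ G₀)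
    (m : ℕ) (hm : m = sInf {k : ℕ | 0 < k ∧ k • g ∈ AddSubgroup.closure (G₀ \ {g})}) :
    IsSetGcd {v : ℕ | ∃ B : Multiset G, IsZeroSumSeq G₀ B ∧ B.count g = v} m ∧
    IsSetGcd {v : ℕ | ∃ A : Multiset G, IsAtomSeq G₀ A ∧ A.count g = v} m ∧
    m = sInf {v : ℕ | 0 < v ∧ ∃ A : Multiset G, IsAtomSeq G₀ A ∧ A.count g = v} ∧
    m = sInf {v : ℕ | 0 < v ∧ ∃ B : Multiset G, IsZeroSumSeq G₀ B ∧ B.count g = v} ∧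
    IsSetGcd {k : ℕ | 0 < k ∧ k • g ∈ AddSubgroup.closure (G₀ \ {g})} m ∧
    m ∣ addOrderOf g := by
  have hord : 0 < addOrderOf g ∧ addOrderOf g • g ∈ AddSubgroup.closure (G₀ \ {g}) :=
    ⟨addOrderOf_pos g, by rw [addOrderOf_nsmul_eq_zero]; exact zero_mem _⟩
  have hKne : {k : ℕ | 0 < k ∧ k • g ∈ AddSubgroup.closure (G₀ \ {g})}.Nonempty := ⟨_, hord⟩
  have hmK : 0 < m ∧ m • g ∈ AddSubgroup.closure (G₀ \ {g}) := hm ▸ Nat.sInf_mem hKne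
  have hmpos : 0 < m := hmK.1
  have hdvd : ∀ k : ℕ, 0 < k → k • g ∈ AddSubgroup.closure (G₀ \ {g}) → m ∣ k := by
    intro k hk hkg
    have hsub : (k % m) • g = k • g - (k / m * m) • g := by
      rw [eq_sub_iff_add_eq, ← add_nsmul, Nat.mod_add_div']
    have hmem : (k % m) • g ∈ AddSubgroup.closure (G₀ \ {g}) := by
      rw [hsub]
      refine sub_mem hkg ?_
      rw [mul_comm, mul_nsmul]
      exact AddSubgroup.nsmul_mem _ hmK.2 _
    have hz : k % m = 0 := by
      by_contra hne
      have h1 : m ≤ k % m := by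
        conv_lhs => rw [hm]
        exact Nat.sInf_le ⟨Nat.pos_of_ne_zero hne, hmem⟩
      have h2 : k % m < m := Nat.mod_lt k hmpos
      omega
    exact Nat.dvd_of_mod_eq_zero hz
  -- divisibility of counts of zero-sum sequences
  have hdvdB : ∀ B : Multiset G, IsZeroSumSeq G₀ B → m ∣ B.count g :=
    fun B hB => m_dvd_count hdvd hB
  -- construct a zero-sum sequence with count exactly m
  obtain ⟨T, hT, hTs⟩ := closure_eq_sums _ (neg_mem hmK.2)
  have hgT : Multiset.count g T = 0 :=
    Multiset.count_eq_zero.2 (fun h => (hT g h).2 rfl)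
  have hB₀ : IsZeroSumSeq G₀ (Multiset.replicate m g + T) := by
    constructor
    · intro x hx
      rcases Multiset.mem_add.1 hx with h | h
      · rw [Multiset.eq_of_mem_replicate h]; exact hg
      · exact (hT x h).1
    · rw [Multiset.sum_add, Multiset.sum_replicate, hTs]; simp
  have hB₀c : (Multiset.replicate m g + T).count g = m := by
    rw [Multiset.count_add, Multiset.count_replicate_self, hgT, add_zero]
  obtain ⟨A₀, hA₀, hA₀le, hA₀pos⟩ := exists_atom_le g _ hB₀ (by rw [hB₀c]; exact hmpos)
  have hA₀c : A₀.count g = m := by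
    have h1 : m ∣ A₀.count g := hdvdB _ hA₀.1
    have h2 : m ≤ A₀.count g := Nat.le_of_dvd hA₀pos h1
    rw [hB₀c] at hA₀le
    omega
  refine ⟨⟨?_, ?_⟩, ⟨?_, ?_⟩, ?_, ?_, ⟨?_, ?_⟩, ?_⟩
  · rintro v ⟨B, hB, rfl⟩
    exact hdvdB B hB
  · intro e he
    exact he m ⟨_, hB₀, hB₀c⟩
  · rintro v ⟨A, hA, rfl⟩
    exact hdvdB A hA.1
  · intro e he
    exact he m ⟨A₀, hA₀, hA₀c⟩
  · refine le_antisymm (le_csInf ⟨m, hmpos, A₀, hA₀, hA₀c⟩ ?_) (Nat.sInf_le ⟨hmpos, A₀, hA₀, hA₀c⟩)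
    rintro v ⟨hv, A, hA, rfl⟩
    exact Nat.le_of_dvd hv (hdvdB A hA.1)
  · refine le_antisymm (le_csInf ⟨m, hmpos, _, hB₀, hB₀c⟩ ?_) (Nat.sInf_le ⟨hmpos, _, hB₀, hB₀c⟩)
    rintro v ⟨hv, B, hB, rfl⟩
    exact Nat.le_of_dvd hv (hdvdB B hB)
  · rintro k ⟨hk, hkg⟩
    exact hdvd k hk hkg
  · intro e he
    exact he m hmK
  · exact hdvd _ hord.1 hord.2
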